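/- (Gale transform in the case m₃ > m₂ > m₁) Assume m₃ > m₂ > m₁ and set k = (m₃ − m₁)/(m₂ − m₁). Define β : S → ℝ by β(u) = 1−k for u ∈ V₁, β(u) = k for u ∈ V₂, and β(u) = −1 for u ∈ V₃. Then β satisfies Σ_{u∈S} β(u) = 0 and Σ_{u∈S} β(u)·u = 0, and every function c : S → ℝ satisfying Σ_{u∈S} c(u) = 0 and Σ_{u∈S} c(u)·u = 0 is a scalar multiple of β. -/

import Mathlib

lemma sum_split3 {α M : Type*} [DecidableEq α] [AddCommMonoid M]
    {V1 V2 V3 S : Finset α} (h : V1 ∪ V2 ∪ V3 = S)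
    (h12 : Disjoint V1 V2) (h13 : Disjoint V1 V3) (h23 : Disjoint V2 V3)
    (f : α → M) :
    ∑ x ∈ S, f x = ∑ x ∈ V1, f x + ∑ x ∈ V2, f x + ∑ x ∈ V3, f x := by
  subst h
  rw [Finset.sum_union (Finset.disjoint_union_left.2 ⟨h13, h23⟩), Finset.sum_union h12]

theorem stmt_3
    (n : ℕ) (hn : 0 < n)
    (S V1 V2 V3 : Finset (Fin (2 * n) → ℝ))
    (h01 : ∀ v ∈ S, ∀ i, v i = 0 ∨ v i = 1)
    (hScard : S.card = n + 2)
    (hunion : V1 ∪ V2 ∪ V3 = S)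
    (hd12 : Disjoint V1 V2) (hd13 : Disjoint V1 V3) (hd23 : Disjoint V2 V3)
    (hne1 : V1.Nonempty) (hne2 : V2.Nonempty) (hne3 : V3.Nonempty)
    (hsum1 : ∑ v ∈ V1, v = fun _ => (1 : ℝ))
    (hsum2 : ∑ v ∈ V2, v = fun _ => (1 : ℝ))
    (hsum3 : ∑ v ∈ V3, v = fun _ => (1 : ℝ))
    (hspan : Module.finrank ℝ (Submodule.span ℝ (S : Set (Fin (2 * n) → ℝ))) = n)
    (h12 : V1.card < V2.card) (h23 : V2.card < V3.card)
    : ∀ k : ℝ, k = ((V3.card : ℝ) - (V1.card : ℝ)) / ((V2.card : ℝ) - (V1.card : ℝ)) →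
      ∀ β : (Fin (2 * n) → ℝ) → ℝ,
        (∀ u ∈ V1, β u = 1 - k) → (∀ u ∈ V2, β u = k) → (∀ u ∈ V3, β u = -1) →
        (∑ u ∈ S, β u = 0 ∧ ∑ u ∈ S, β u • u = 0 ∧
          ∀ c : (Fin (2 * n) → ℝ) → ℝ, ∑ u ∈ S, c u = 0 → ∑ u ∈ S, c u • u = 0 →
            ∃ t : ℝ, ∀ u ∈ S, c u = t * β u) := by
  classical
  intro k hk β hb1 hb2 hb3
  -- basic subset facts
  have hsub1 : V1 ⊆ S := by rw [← hunion]; intro x hx; simp [hx]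
  have hsub2 : V2 ⊆ S := by rw [← hunion]; intro x hx; simp [hx]
  have hsub3 : V3 ⊆ S := by rw [← hunion]; intro x hx; simp [hx]
  set m1 : ℝ := (V1.card : ℝ)
  set m2 : ℝ := (V2.card : ℝ)
  set m3 : ℝ := (V3.card : ℝ)
  have hm21 : m2 - m1 ≠ 0 := by
    have : m1 < m2 := by simp only [m1, m2]; exact_mod_cast h12
    linarith
  have hkk : k * (m2 - m1) = m3 - m1 := by
    rw [hk]; field_simp
  -- sum of β
  have hβsum : ∑ u ∈ S, β u = 0 := by
    rw [sum_split3 hunion hd12 hd13 hd23 β,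
      Finset.sum_congr rfl hb1, Finset.sum_congr rfl hb2, Finset.sum_congr rfl hb3,
      Finset.sum_const, Finset.sum_const, Finset.sum_const]
    simp only [nsmul_eq_mul]
    show m1 * (1 - k) + m2 * k + m3 * (-1) = 0
    linear_combination hkk
  -- sum of β u • u
  have hβvsum : ∑ u ∈ S, β u • u = 0 := by
    rw [sum_split3 hunion hd12 hd13 hd23 (fun u => β u • u)]
    have e1 : ∑ u ∈ V1, β u • u = (1 - k) • (fun _ => (1:ℝ)) := by
      rw [Finset.sum_congr rfl (fun u hu => by rw [hb1 u hu]), ← Finset.smul_sum, hsum1]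
    have e2 : ∑ u ∈ V2, β u • u = k • (fun _ => (1:ℝ)) := by
      rw [Finset.sum_congr rfl (fun u hu => by rw [hb2 u hu]), ← Finset.smul_sum, hsum2]
    have e3 : ∑ u ∈ V3, β u • u = (-1 : ℝ) • (fun _ => (1:ℝ)) := by
      rw [Finset.sum_congr rfl (fun u hu => by rw [hb3 u hu]), ← Finset.smul_sum, hsum3]
    rw [e1, e2, e3]
    funext i
    simp
  refine ⟨hβsum, hβvsum, ?_⟩
  -- the Gale-transform part
  set ι := {x // x ∈ S}
  set v : ι → (Fin (2 * n) → ℝ) := fun u => (u : Fin (2 * n) → ℝ) with hv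
  set φ := Fintype.linearCombination ℝ v with hφ
  have hrange : LinearMap.range φ = Submodule.span ℝ (S : Set (Fin (2 * n) → ℝ)) := by
    rw [hφ, Fintype.range_linearCombination]
    congr 1
    exact Subtype.range_coe
  have hker : Module.finrank ℝ (LinearMap.ker φ) = 2 := by
    have h1 := LinearMap.finrank_range_add_finrank_ker φ
    rw [hrange, hspan] at h1
    have h2 : Module.finrank ℝ (ι → ℝ) = n + 2 := by
      rw [Module.finrank_fintype_fun_eq_card]
      simp only [ι, Fintype.card_coe, hScard]
    omega
  set d12 : ι → ℝ := fun u =>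
    (if (u : Fin (2 * n) → ℝ) ∈ V1 then (1:ℝ) else 0) -
    (if (u : Fin (2 * n) → ℝ) ∈ V2 then (1:ℝ) else 0) with hd12def
  set d13 : ι → ℝ := fun u =>
    (if (u : Fin (2 * n) → ℝ) ∈ V1 then (1:ℝ) else 0) -
    (if (u : Fin (2 * n) → ℝ) ∈ V3 then (1:ℝ) else 0) with hd13def
  have key : ∀ (W : Finset (Fin (2 * n) → ℝ)), W ⊆ S →
      (∑ i : ι, (if (i : Fin (2 * n) → ℝ) ∈ W then (1:ℝ) else 0) • (i : Fin (2 * n) → ℝ))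
        = ∑ u ∈ W, u := by
    intro W hW
    rw [Finset.sum_coe_sort S (fun u => (if u ∈ W then (1:ℝ) else 0) • u)]
    simp only [ite_smul, one_smul, zero_smul]
    rw [Finset.sum_ite_mem, Finset.inter_eq_right.2 hW]
  have hφ12 : φ d12 = 0 := by
    rw [hφ, Fintype.linearCombination_apply]
    have : ∑ i : ι, d12 i • v i =
        (∑ i : ι, (if (i : Fin (2 * n) → ℝ) ∈ V1 then (1:ℝ) else 0) • (i : Fin (2 * n) → ℝ)) -
        (∑ i : ι, (if (i : Fin (2 * n) → ℝ) ∈ V2 then (1:ℝ) else 0) • (i : Fin (2 * n) → ℝ)) := by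
      rw [← Finset.sum_sub_distrib]
      exact Finset.sum_congr rfl fun i _ => by rw [hd12def]; simp [sub_smul, v]
    rw [this, key V1 hsub1, key V2 hsub2, hsum1, hsum2, sub_self]
  have hφ13 : φ d13 = 0 := by
    rw [hφ, Fintype.linearCombination_apply]
    have : ∑ i : ι, d13 i • v i =
        (∑ i : ι, (if (i : Fin (2 * n) → ℝ) ∈ V1 then (1:ℝ) else 0) • (i : Fin (2 * n) → ℝ)) -
        (∑ i : ι, (if (i : Fin (2 * n) → ℝ) ∈ V3 then (1:ℝ) else 0) • (i : Fin (2 * n) → ℝ)) := by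
      rw [← Finset.sum_sub_distrib]
      exact Finset.sum_congr rfl fun i _ => by rw [hd13def]; simp [sub_smul, v]
    rw [this, key V1 hsub1, key V3 hsub3, hsum1, hsum3, sub_self]
  obtain ⟨u2, hu2⟩ := hne2
  obtain ⟨u3, hu3⟩ := hne3
  have hu2S : u2 ∈ S := hsub2 hu2
  have hu3S : u3 ∈ S := hsub3 hu3
  have hu2n1 : u2 ∉ V1 := Finset.disjoint_right.mp hd12 hu2
  have hu2n3 : u2 ∉ V3 := Finset.disjoint_left.mp hd23 hu2
  have hu3n1 : u3 ∉ V1 := Finset.disjoint_right.mp hd13 hu3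
  have hu3n2 : u3 ∉ V2 := Finset.disjoint_right.mp hd23 hu3
  have hli : LinearIndependent ℝ ![d12, d13] := by
    rw [LinearIndependent.pair_iff]
    intro s t hst
    have h2 := congrFun hst ⟨u2, hu2S⟩
    have h3 := congrFun hst ⟨u3, hu3S⟩
    simp only [Pi.add_apply, Pi.smul_apply, smul_eq_mul, Pi.zero_apply, hd12def, hd13def,
      hu2, hu3, hu2n1, hu2n3, hu3n1, hu3n2, if_true, if_false] at h2 h3
    constructor <;> linarith
  have hspan2 : Submodule.span ℝ (Set.range ![d12, d13]) = LinearMap.ker φ := by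
    apply Submodule.eq_of_le_of_finrank_eq
    · rw [Submodule.span_le]
      rintro x ⟨i, rfl⟩
      fin_cases i
      · exact LinearMap.mem_ker.2 hφ12
      · exact LinearMap.mem_ker.2 hφ13
    · rw [finrank_span_eq_card hli, hker]
      simp
  intro c hc0 hcv
  have hmem : (fun i : ι => c i) ∈ LinearMap.ker φ := by
    rw [LinearMap.mem_ker, hφ, Fintype.linearCombination_apply]
    rw [show (∑ i : ι, c i • v i) = ∑ i : ι, (fun u => c u • u) (i : Fin (2 * n) → ℝ) from rfl,
      Finset.sum_coe_sort S (fun u => c u • u)]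
    exact hcv
  rw [← hspan2, Submodule.mem_span_range_iff_exists_fun] at hmem
  obtain ⟨g, hg⟩ := hmem
  set a := g 0 with ha
  set b := g 1 with hb
  have hg' : ∀ i : ι, a * d12 i + b * d13 i = c i := by
    intro i
    have := congrFun hg i
    simpa [Fin.sum_univ_two] using this
  have hcV1 : ∀ u ∈ V1, c u = a + b := by
    intro u hu
    have hun2 : u ∉ V2 := Finset.disjoint_left.mp hd12 hu
    have hun3 : u ∉ V3 := Finset.disjoint_left.mp hd13 hu
    have := hg' ⟨u, hsub1 hu⟩
    simp only [hd12def, hd13def, hu, hun2, hun3, if_true, if_false] at this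
    linarith
  have hcV2 : ∀ u ∈ V2, c u = -a := by
    intro u hu
    have hun1 : u ∉ V1 := Finset.disjoint_right.mp hd12 hu
    have hun3 : u ∉ V3 := Finset.disjoint_left.mp hd23 hu
    have := hg' ⟨u, hsub2 hu⟩
    simp only [hd12def, hd13def, hu, hun1, hun3, if_true, if_false] at this
    linarith
  have hcV3 : ∀ u ∈ V3, c u = -b := by
    intro u hu
    have hun1 : u ∉ V1 := Finset.disjoint_right.mp hd13 hu
    have hun2 : u ∉ V2 := Finset.disjoint_right.mp hd23 hu
    have := hg' ⟨u, hsub3 hu⟩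
    simp only [hd12def, hd13def, hu, hun1, hun2, if_true, if_false] at this
    linarith
  have hS0 : (a + b) * m1 + (-a) * m2 + (-b) * m3 = 0 := by
    rw [← hc0, sum_split3 hunion hd12 hd13 hd23 c,
      Finset.sum_congr rfl hcV1, Finset.sum_congr rfl hcV2, Finset.sum_congr rfl hcV3,
      Finset.sum_const, Finset.sum_const, Finset.sum_const]
    simp only [nsmul_eq_mul]
    ring
  have hab : a = -(b * k) := by
    have h' : a * (m2 - m1) = (-(b * k)) * (m2 - m1) := by
      linear_combination -hS0 + b * hkk
    exact mul_right_cancel₀ hm21 h'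
  refine ⟨b, fun u hu => ?_⟩
  have : u ∈ V1 ∪ V2 ∪ V3 := by rw [hunion]; exact hu
  rcases Finset.mem_union.mp this with h' | h3
  · rcases Finset.mem_union.mp h' with h1 | h2
    · rw [hcV1 u h1, hb1 u h1, hab]; ring
    · rw [hcV2 u h2, hb2 u h2, hab]; ring
  · rw [hcV3 u h3, hb3 u h3]; ring
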